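/- Let G be an (n, m) graph with m > n. Then the spread of the line graph of G equals q_1, the largest signless Laplacian eigenvalue of G, and S_L(G) = q_1 ≥ S_Q(G) = q_1 - q_n, with equality if and only if G has a bipartite connected component. -/

import Mathlib

open Matrix Polynomial BigOperators

noncomputable section

namespace SpreadPaper

variable {V : Type*}

/-- The adjacency matrix of a simple graph over `ℝ` (classical decidability). -/
noncomputable def adjMat (G : SimpleGraph V) : Matrix V V ℝ :=
  letI := Classical.decRel G.Adj
  G.adjMatrix ℝ

lemma adjMat_isHermitian (G : SimpleGraph V) : (adjMat G).IsHermitian := by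
  letI := Classical.decRel G.Adj
  ext i j
  simp [adjMat, Matrix.conjTranspose_apply, SimpleGraph.adjMatrix_apply, G.adj_comm]

/-- The degree of a vertex (classical decidability). -/
noncomputable def deg [Fintype V] (G : SimpleGraph V) (v : V) : ℕ :=
  letI := Classical.decRel G.Adj
  G.degree v

/-- The signless Laplacian matrix `D + A` of a graph. -/
noncomputable def signQ [Fintype V] [DecidableEq V] (G : SimpleGraph V) : Matrix V V ℝ :=
  Matrix.diagonal (fun v => (deg G v : ℝ)) + adjMat G

lemma signQ_isHermitian [Fintype V] [DecidableEq V] (G : SimpleGraph V) :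
    (signQ G).IsHermitian :=
  (Matrix.isHermitian_diagonal _).add (adjMat_isHermitian G)

/-- The Laplacian matrix `D - A` of a graph. -/
noncomputable def lap [Fintype V] [DecidableEq V] (G : SimpleGraph V) : Matrix V V ℝ :=
  Matrix.diagonal (fun v => (deg G v : ℝ)) - adjMat G

lemma lap_isHermitian [Fintype V] [DecidableEq V] (G : SimpleGraph V) :
    (lap G).IsHermitian :=
  (Matrix.isHermitian_diagonal _).sub (adjMat_isHermitian G)

/-- The largest eigenvalue of a Hermitian real matrix. -/
noncomputable def maxEig {m : Type*} [Fintype m] [DecidableEq m] {A : Matrix m m ℝ}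
    (hA : A.IsHermitian) : ℝ :=
  ⨆ i, hA.eigenvalues i

/-- The smallest eigenvalue of a Hermitian real matrix. -/
noncomputable def minEig {m : Type*} [Fintype m] [DecidableEq m] {A : Matrix m m ℝ}
    (hA : A.IsHermitian) : ℝ :=
  ⨅ i, hA.eigenvalues i

/-- The spread (largest minus smallest eigenvalue) of a Hermitian real matrix. -/
noncomputable def sprd {m : Type*} [Fintype m] [DecidableEq m] {A : Matrix m m ℝ}
    (hA : A.IsHermitian) : ℝ :=
  maxEig hA - minEig hA

/-- `q` lists the eigenvalues of the Hermitian matrix `A` (with multiplicity) in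
nonincreasing order. -/
def IsDescSpectrum {m : Type*} [Fintype m] [DecidableEq m] {A : Matrix m m ℝ}
    (hA : A.IsHermitian) {k : ℕ} (q : Fin k → ℝ) : Prop :=
  Antitone q ∧ ∃ e : Fin k ≃ m, ∀ i, q i = hA.eigenvalues (e i)

noncomputable instance edgeSetFintype [Fintype V] (G : SimpleGraph V) : Fintype G.edgeSet :=
  Set.Finite.fintype (Set.toFinite _)

/-- The number of edges of a graph. -/
noncomputable def numEdges (G : SimpleGraph V) : ℕ := Nat.card G.edgeSet

/-- The total graph of `G`: vertices are the vertices and edges of `G`, with adjacency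
given by adjacency in `G`, adjacency in the line graph, or vertex-edge incidence. -/
def totalGraph (G : SimpleGraph V) : SimpleGraph (V ⊕ G.edgeSet) where
  Adj x y :=
    match x, y with
    | Sum.inl u, Sum.inl v => G.Adj u v
    | Sum.inl u, Sum.inr e => u ∈ (e : Sym2 V)
    | Sum.inr e, Sum.inl u => u ∈ (e : Sym2 V)
    | Sum.inr e, Sum.inr f => e ≠ f ∧ ∃ v, v ∈ (e : Sym2 V) ∧ v ∈ (f : Sym2 V)
  symm := by
    refine ⟨?_⟩
    rintro (u|e) (v|f) h
    · exact G.adj_symm h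
    · exact h
    · exact h
    · exact ⟨h.1.symm, h.2.choose, h.2.choose_spec.2, h.2.choose_spec.1⟩
  loopless := by
    refine ⟨?_⟩
    rintro (u|e) h
    · exact G.irrefl h
    · exact h.1 rfl

/-- The join `G ∨ H` of two graphs: all edges between the two vertex sets are added. -/
def joinG {α β : Type*} (G : SimpleGraph α) (H : SimpleGraph β) : SimpleGraph (α ⊕ β) where
  Adj x y :=
    match x, y with
    | Sum.inl a, Sum.inl b => G.Adj a b
    | Sum.inr a, Sum.inr b => H.Adj a b
    | Sum.inl _, Sum.inr _ => True
    | Sum.inr _, Sum.inl _ => True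
  symm := by
    refine ⟨?_⟩
    rintro (a|a) (b|b) h
    · exact G.adj_symm h
    · exact trivial
    · exact trivial
    · exact H.adj_symm h
  loopless := by
    refine ⟨?_⟩
    rintro (a|a) h
    · exact G.irrefl h
    · exact H.irrefl h

/-- The disjoint union of two graphs. -/
def dunion {α β : Type*} (G : SimpleGraph α) (H : SimpleGraph β) : SimpleGraph (α ⊕ β) where
  Adj x y :=
    match x, y with
    | Sum.inl a, Sum.inl b => G.Adj a b
    | Sum.inr a, Sum.inr b => H.Adj a b
    | Sum.inl _, Sum.inr _ => False
    | Sum.inr _, Sum.inl _ => False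
  symm := by
    refine ⟨?_⟩
    rintro (a|a) (b|b) h
    · exact G.adj_symm h
    · exact h.elim
    · exact h.elim
    · exact H.adj_symm h
  loopless := by
    refine ⟨?_⟩
    rintro (a|a) h
    · exact G.irrefl h
    · exact H.irrefl h

/-- `G` is `r`-regular. -/
def IsReg [Fintype V] (G : SimpleGraph V) (r : ℕ) : Prop := ∀ v, deg G v = r

/-- The minimum degree of a graph. -/
noncomputable def minDeg [Fintype V] (G : SimpleGraph V) : ℕ := sInf (Set.range (deg G))

/-- The maximum degree of a graph. -/
noncomputable def maxDeg [Fintype V] (G : SimpleGraph V) : ℕ := sSup (Set.range (deg G))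

/-- The first Zagreb index of a graph: the sum of the squares of the vertex degrees. -/
noncomputable def zagreb [Fintype V] (G : SimpleGraph V) : ℕ := ∑ v, (deg G v) ^ 2

/-- The vertex connectivity of `G` is at most `k`: some set of at most `k` vertices
disconnects `G`. -/
def HasConnLe (G : SimpleGraph V) (k : ℕ) : Prop :=
  ∃ U : Set V, Nat.card U ≤ k ∧ (Uᶜ).Nonempty ∧ ¬ (G.induce Uᶜ).Preconnected


/-! ### Auxiliary machinery for the proof -/

section EigenAux

variable {m : Type*} [Fintype m] [DecidableEq m] {A : Matrix m m ℝ}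

/-- `μ` is an eigenvalue of `A` with a real eigenvector. -/
def HasEig {m : Type*} [Fintype m] (A : Matrix m m ℝ) (μ : ℝ) : Prop :=
  ∃ x : m → ℝ, x ≠ 0 ∧ A *ᵥ x = μ • x

lemma hasEig_eigenvalues (hA : A.IsHermitian) (i : m) : HasEig A (hA.eigenvalues i) := by
  refine ⟨(WithLp.equiv 2 _) (hA.eigenvectorBasis i), ?_, hA.mulVec_eigenvectorBasis i⟩
  intro h
  have h1 := hA.eigenvectorBasis.orthonormal.1 i
  have h2 : hA.eigenvectorBasis i = 0 := by
    apply (WithLp.equiv 2 _).injective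
    simpa using h
  rw [h2] at h1
  simp at h1

lemma hasEig_exists_index (hA : A.IsHermitian) {μ : ℝ} (h : HasEig A μ) :
    ∃ i, hA.eigenvalues i = μ := by
  obtain ⟨x, hx, hAx⟩ := h
  by_contra hc
  push_neg at hc
  apply hx
  set b := hA.eigenvectorBasis
  have key : ∀ i, (WithLp.equiv 2 _) (b i) ⬝ᵥ x = 0 := by
    intro i
    have h1 : (A *ᵥ (WithLp.equiv 2 _) (b i)) ⬝ᵥ x
        = hA.eigenvalues i * ((WithLp.equiv 2 _) (b i) ⬝ᵥ x) := by
      rw [show (WithLp.equiv 2 _) (b i) = (b i).ofLp from rfl, hA.mulVec_eigenvectorBasis i, smul_dotProduct]; rfl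
    have h2 : (A *ᵥ (WithLp.equiv 2 _) (b i)) ⬝ᵥ x
        = μ * ((WithLp.equiv 2 _) (b i) ⬝ᵥ x) := by
      have hsym : Aᵀ = A := by
        have h3 := hA; rwa [Matrix.IsHermitian, conjTranspose_eq_transpose_of_trivial] at h3
      have hv : A *ᵥ (WithLp.equiv 2 _) (b i) = (WithLp.equiv 2 _) (b i) ᵥ* A := by
        conv_lhs => rw [← hsym]
        rw [mulVec_transpose]
      rw [hv, ← dotProduct_mulVec, hAx, dotProduct_smul]
      rfl
    rcases mul_eq_mul_right_iff.mp (h1.symm.trans h2) with h | h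
    · exact absurd h (hc i)
    · exact h
  have hrepr : ∀ i, b.repr ((WithLp.equiv 2 _).symm x) i = 0 := by
    intro i
    rw [OrthonormalBasis.repr_apply_apply, PiLp.inner_apply]
    simpa [dotProduct, mul_comm] using key i
  have hz : (WithLp.equiv 2 _).symm x = 0 := by
    apply b.repr.injective
    ext i; rw [map_zero]; exact hrepr i
  simpa using congrArg (WithLp.equiv 2 _) hz

lemma eigenvalues_le_maxEig (hA : A.IsHermitian) (i : m) :
    hA.eigenvalues i ≤ maxEig hA :=
  le_ciSup (Set.Finite.bddAbove (Set.finite_range _)) i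

lemma minEig_le_eigenvalues (hA : A.IsHermitian) (i : m) :
    minEig hA ≤ hA.eigenvalues i :=
  ciInf_le (Set.Finite.bddBelow (Set.finite_range _)) i

lemma hasEig_le_maxEig (hA : A.IsHermitian) {μ : ℝ} (h : HasEig A μ) : μ ≤ maxEig hA := by
  obtain ⟨i, hi⟩ := hasEig_exists_index hA h
  exact hi ▸ eigenvalues_le_maxEig hA i

lemma minEig_le_hasEig (hA : A.IsHermitian) {μ : ℝ} (h : HasEig A μ) : minEig hA ≤ μ := by
  obtain ⟨i, hi⟩ := hasEig_exists_index hA h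
  exact hi ▸ minEig_le_eigenvalues hA i

lemma exists_eig_maxEig [Nonempty m] (hA : A.IsHermitian) :
    ∃ i, hA.eigenvalues i = maxEig hA := by
  obtain ⟨i, hi⟩ := Finite.exists_max hA.eigenvalues
  exact ⟨i, le_antisymm (eigenvalues_le_maxEig hA i) (ciSup_le hi)⟩

lemma exists_eig_minEig [Nonempty m] (hA : A.IsHermitian) :
    ∃ i, hA.eigenvalues i = minEig hA := by
  obtain ⟨i, hi⟩ := Finite.exists_min hA.eigenvalues
  exact ⟨i, le_antisymm (le_ciInf hi) (minEig_le_eigenvalues hA i)⟩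

lemma hasEig_maxEig [Nonempty m] (hA : A.IsHermitian) : HasEig A (maxEig hA) := by
  obtain ⟨i, hi⟩ := exists_eig_maxEig hA
  exact hi ▸ hasEig_eigenvalues hA i

lemma hasEig_minEig [Nonempty m] (hA : A.IsHermitian) : HasEig A (minEig hA) := by
  obtain ⟨i, hi⟩ := exists_eig_minEig hA
  exact hi ▸ hasEig_eigenvalues hA i

lemma minEig_nonneg [Nonempty m] (hA : A.PosSemidef) {hA' : A.IsHermitian} :
    0 ≤ minEig hA' :=
  le_ciInf fun i => hA.eigenvalues_nonneg i

lemma hasEig_add_smul_one {μ c : ℝ} (h : HasEig A μ) : HasEig (A + c • 1) (μ + c) := by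
  obtain ⟨x, hx, hAx⟩ := h
  refine ⟨x, hx, ?_⟩
  rw [add_mulVec, hAx, smul_mulVec, one_mulVec, add_smul]

lemma hasEig_of_add_smul_one {μ c : ℝ} (h : HasEig (A + c • 1) μ) : HasEig A (μ - c) := by
  obtain ⟨x, hx, hAx⟩ := h
  refine ⟨x, hx, ?_⟩
  have h2 : A *ᵥ x + c • x = μ • x := by
    rw [← hAx, add_mulVec, smul_mulVec, one_mulVec]
  rw [sub_smul, ← h2]
  abel

lemma maxEig_add_smul_one [Nonempty m] (hA : A.IsHermitian) (c : ℝ)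
    (hB : (A + c • 1).IsHermitian) : maxEig hB = maxEig hA + c := by
  apply le_antisymm
  · apply ciSup_le
    intro i
    have h := hasEig_of_add_smul_one (hasEig_eigenvalues hB i)
    have := hasEig_le_maxEig hA h
    linarith
  · have h := hasEig_add_smul_one (c := c) (hasEig_maxEig hA)
    exact hasEig_le_maxEig hB h

lemma minEig_add_smul_one [Nonempty m] (hA : A.IsHermitian) (c : ℝ)
    (hB : (A + c • 1).IsHermitian) : minEig hB = minEig hA + c := by
  apply le_antisymm
  · have h := hasEig_add_smul_one (c := c) (hasEig_minEig hA)
    exact minEig_le_hasEig hB h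
  · apply le_ciInf
    intro i
    have h := hasEig_of_add_smul_one (hasEig_eigenvalues hB i)
    have := minEig_le_hasEig hA h
    linarith

lemma maxEig_congr {A B : Matrix m m ℝ} (h : A = B) (hA : A.IsHermitian)
    (hB : B.IsHermitian) : maxEig hA = maxEig hB := by subst h; rfl

lemma minEig_congr {A B : Matrix m m ℝ} (h : A = B) (hA : A.IsHermitian)
    (hB : B.IsHermitian) : minEig hA = minEig hB := by subst h; rfl

/-- nonzero eigenvalue transfer between `MᵀM` and `MMᵀ`. -/
lemma hasEig_transpose_mul_of_mul_transpose {a b : Type*} [Fintype a] [Fintype b]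
    (M : Matrix a b ℝ) {μ : ℝ} (hμ : μ ≠ 0) (h : HasEig (Mᵀ * M) μ) :
    HasEig (M * Mᵀ) μ := by
  obtain ⟨x, hx, hAx⟩ := h
  refine ⟨M *ᵥ x, ?_, ?_⟩
  · intro h0
    apply hx
    have h1 : (Mᵀ * M) *ᵥ x = 0 := by
      rw [← mulVec_mulVec, h0, mulVec_zero]
    rw [hAx] at h1
    have := smul_eq_zero.mp h1
    tauto
  · rw [mulVec_mulVec, Matrix.mul_assoc, ← mulVec_mulVec, hAx, mulVec_smul]

end EigenAux

section IncAux

open scoped Classical in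
/-- The vertex-edge incidence matrix of a graph. -/
noncomputable def inc [Fintype V] (G : SimpleGraph V) : Matrix V G.edgeSet ℝ :=
  Matrix.of fun v e => if v ∈ (e : Sym2 V) then 1 else 0

lemma exists_adj_eq {G : SimpleGraph V} (e : G.edgeSet) :
    ∃ a b, G.Adj a b ∧ (e : Sym2 V) = s(a, b) := by
  obtain ⟨e, he⟩ := e
  induction e with
  | _ a b => exact ⟨a, b, he, rfl⟩

lemma inc_apply_mem [Fintype V] {G : SimpleGraph V} {v : V} {e : G.edgeSet}
    (h : v ∈ (e : Sym2 V)) : inc G v e = 1 := by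
  simp [inc, h]

lemma inc_apply_not_mem [Fintype V] {G : SimpleGraph V} {v : V} {e : G.edgeSet}
    (h : v ∉ (e : Sym2 V)) : inc G v e = 0 := by
  simp [inc, h]

set_option linter.unusedSectionVars false

open Finset in
lemma sum_ite_pair [Fintype V] [DecidableEq V] {a b : V} (hab : a ≠ b) (x : V → ℝ) :
    ∑ v, (if v = a ∨ v = b then x v else 0) = x a + x b := by
  have h : ∀ v, (if v = a ∨ v = b then x v else 0)
      = (if v = a then x v else 0) + (if v = b then x v else 0) := by
    intro v
    by_cases ha : v = a
    · subst ha; simp [hab]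
    · by_cases hb : v = b
      · subst hb; simp [Ne.symm hab, ha]
      · simp [ha, hb]
  rw [Finset.sum_congr rfl fun v _ => h v, Finset.sum_add_distrib]
  simp

variable [Fintype V] [DecidableEq V] {G : SimpleGraph V}

lemma dot_inc_col (x : V → ℝ) {e : G.edgeSet} {a b : V} (hab : a ≠ b)
    (he : (e : Sym2 V) = s(a, b)) :
    (fun v => inc G v e) ⬝ᵥ x = x a + x b := by
  have h : ∀ v, inc G v e * x v = if v = a ∨ v = b then x v else 0 := by
    intro v
    by_cases hv : v ∈ (e : Sym2 V)
    · rw [inc_apply_mem hv, one_mul, if_pos (by rwa [he, Sym2.mem_iff] at hv)]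
    · rw [inc_apply_not_mem hv, zero_mul, if_neg (by rwa [he, Sym2.mem_iff] at hv)]
  rw [dotProduct, Finset.sum_congr rfl fun v _ => h v, sum_ite_pair hab]

lemma shared_vertex_count {e f : G.edgeSet} (hef : e ≠ f) :
    ∀ u w : V, u ∈ (e : Sym2 V) → u ∈ (f : Sym2 V) → w ∈ (e : Sym2 V) → w ∈ (f : Sym2 V) →
      u = w := by
  intro u w hue huf hwe hwf
  by_contra h
  exact hef (Subtype.ext (((Sym2.mem_and_mem_iff h).mp ⟨hue, hwe⟩).trans
    ((Sym2.mem_and_mem_iff h).mp ⟨huf, hwf⟩).symm))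

lemma inc_mul_transpose (G : SimpleGraph V) : inc G * (inc G)ᵀ = signQ G := by
  letI := Classical.decRel G.Adj
  ext u v
  rw [mul_apply]
  simp only [transpose_apply, signQ, Matrix.add_apply, diagonal_apply, adjMat,
    SimpleGraph.adjMatrix_apply]
  by_cases huv : u = v
  · subst huv
    simp only [if_pos rfl, G.irrefl, if_false, add_zero]
    have h1 : ∀ e : G.edgeSet, inc G u e * inc G u e
        = if u ∈ (e : Sym2 V) then (1:ℝ) else 0 := by
      intro e
      by_cases h : u ∈ (e : Sym2 V)
      · rw [inc_apply_mem h, mul_one, if_pos h]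
      · rw [inc_apply_not_mem h, mul_zero, if_neg h]
    rw [Finset.sum_congr rfl fun e _ => h1 e, ← Finset.natCast_card_filter]
    norm_cast
    rw [← Fintype.card_subtype]
    have h2 : deg G u = Fintype.card (G.incidenceSet u) := by
      rw [SimpleGraph.card_incidenceSet_eq_degree]; rfl
    rw [h2]
    apply Fintype.card_congr
    exact {
      toFun := fun x => ⟨(x.1 : Sym2 V), x.1.2, x.2⟩
      invFun := fun x => ⟨⟨(x : Sym2 V), x.2.1⟩, x.2.2⟩
      left_inv := fun x => rfl
      right_inv := fun x => rfl }
  · rw [if_neg huv, zero_add]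
    have h1 : ∀ e : G.edgeSet, inc G u e * inc G v e
        = if u ∈ (e : Sym2 V) ∧ v ∈ (e : Sym2 V) then (1:ℝ) else 0 := by
      intro e
      by_cases h : u ∈ (e : Sym2 V)
      · by_cases h' : v ∈ (e : Sym2 V)
        · rw [inc_apply_mem h, inc_apply_mem h', mul_one, if_pos ⟨h, h'⟩]
        · rw [inc_apply_not_mem h', mul_zero, if_neg (fun hc => h' hc.2)]
      · rw [inc_apply_not_mem h, zero_mul, if_neg (fun hc => h hc.1)]
    rw [Finset.sum_congr rfl fun e _ => h1 e, ← Finset.natCast_card_filter]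
    by_cases hadj : G.Adj u v
    · rw [if_pos hadj]
      have h3 : Finset.univ.filter (fun e : G.edgeSet =>
          u ∈ (e : Sym2 V) ∧ v ∈ (e : Sym2 V)) = {⟨s(u,v), hadj⟩} := by
        ext e
        simp only [Finset.mem_filter, Finset.mem_univ, true_and, Finset.mem_singleton]
        rw [Sym2.mem_and_mem_iff huv]
        exact ⟨fun h => Subtype.ext h, fun h => by rw [h]⟩
      rw [h3]; simp
    · rw [if_neg hadj]
      have h3 : Finset.univ.filter (fun e : G.edgeSet =>
          u ∈ (e : Sym2 V) ∧ v ∈ (e : Sym2 V)) = ∅ := by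
        ext e
        simp only [Finset.mem_filter, Finset.mem_univ, true_and, Finset.notMem_empty,
          iff_false]
        intro h
        have h4 := (Sym2.mem_and_mem_iff huv).mp h
        exact hadj (by rw [← SimpleGraph.mem_edgeSet, ← h4]; exact e.2)
      rw [h3]; simp

lemma transpose_mul_inc (G : SimpleGraph V) :
    (inc G)ᵀ * inc G = adjMat G.lineGraph + (2 : ℝ) • 1 := by
  ext e f
  rw [mul_apply]
  simp only [transpose_apply, Matrix.add_apply, Matrix.smul_apply, one_apply, adjMat,
    SimpleGraph.adjMatrix_apply, smul_eq_mul]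
  have h1 : ∀ v : V, inc G v e * inc G v f
      = if v ∈ (e : Sym2 V) ∧ v ∈ (f : Sym2 V) then (1:ℝ) else 0 := by
    intro v
    by_cases h : v ∈ (e : Sym2 V)
    · by_cases h' : v ∈ (f : Sym2 V)
      · rw [inc_apply_mem h, inc_apply_mem h', mul_one, if_pos ⟨h, h'⟩]
      · rw [inc_apply_not_mem h', mul_zero, if_neg (fun hc => h' hc.2)]
    · rw [inc_apply_not_mem h, zero_mul, if_neg (fun hc => h hc.1)]
  rw [Finset.sum_congr rfl fun v _ => h1 v, ← Finset.natCast_card_filter]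
  by_cases hef : e = f
  · subst hef
    simp only [if_pos rfl, mul_one]
    rw [if_neg (G.lineGraph.irrefl), zero_add]
    obtain ⟨a, b, hab, he⟩ := exists_adj_eq e
    have h2 : Finset.univ.filter (fun v : V => v ∈ (e : Sym2 V) ∧ v ∈ (e : Sym2 V))
        = {a, b} := by
      ext v
      simp [he, Sym2.mem_iff]
    rw [h2, Finset.card_insert_of_notMem (by simp [hab.ne]), Finset.card_singleton]
    norm_num
  · rw [if_neg hef, mul_zero, add_zero]
    by_cases hadj : G.lineGraph.Adj e f
    · rw [if_pos hadj]
      obtain ⟨-, u, hue, huf⟩ := SimpleGraph.lineGraph_adj_iff_exists.mp hadj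
      have h2 : Finset.univ.filter (fun v : V => v ∈ (e : Sym2 V) ∧ v ∈ (f : Sym2 V))
          = {u} := by
        ext v
        simp only [Finset.mem_filter, Finset.mem_univ, true_and, Finset.mem_singleton]
        exact ⟨fun h => shared_vertex_count hef v u h.1 h.2 hue huf,
          fun h => h ▸ ⟨hue, huf⟩⟩
      rw [h2]; simp
    · rw [if_neg hadj]
      have h2 : Finset.univ.filter (fun v : V => v ∈ (e : Sym2 V) ∧ v ∈ (f : Sym2 V))
          = ∅ := by
        ext v
        simp only [Finset.mem_filter, Finset.mem_univ, true_and, Finset.notMem_empty,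
          iff_false]
        intro h
        exact hadj (SimpleGraph.lineGraph_adj_iff_exists.mpr ⟨hef, v, h.1, h.2⟩)
      rw [h2]; simp

lemma edge_sum_zero {x : V → ℝ} (hNt : (inc G)ᵀ *ᵥ x = 0) {a b : V} (hab : G.Adj a b) :
    x a + x b = 0 := by
  have h := congrFun hNt (⟨s(a,b), hab⟩ : G.edgeSet)
  rw [← dot_inc_col x (e := ⟨s(a,b), hab⟩) hab.ne rfl]
  exact h

lemma bipartite_of_hasEigQ_zero (h : HasEig (signQ G) 0) :
    ∃ C : G.ConnectedComponent, (G.induce C.supp).Colorable 2 := by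
  obtain ⟨x, hx, hQx⟩ := h
  rw [zero_smul] at hQx
  have hQ := inc_mul_transpose G
  have hNt : (inc G)ᵀ *ᵥ x = 0 := by
    have h3 : x ⬝ᵥ ((inc G * (inc G)ᵀ) *ᵥ x) = ((inc G)ᵀ *ᵥ x) ⬝ᵥ ((inc G)ᵀ *ᵥ x) := by
      rw [← mulVec_mulVec, dotProduct_mulVec, ← mulVec_transpose]
    have h2 : x ⬝ᵥ ((inc G * (inc G)ᵀ) *ᵥ x) = 0 := by rw [hQ, hQx, dotProduct_zero]
    exact dotProduct_self_eq_zero.mp (h3 ▸ h2)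
  obtain ⟨v₀, hv₀'⟩ := Function.ne_iff.mp hx
  have hv₀ : x v₀ ≠ 0 := hv₀'
  refine ⟨G.connectedComponentMk v₀, ?_⟩
  have key : ∀ {a b : V} (_ : G.Walk a b), x b ≠ 0 → x a ≠ 0 := by
    intro a b p
    induction p with
    | nil => exact id
    | cons h p ih =>
      intro hb
      have h1 := edge_sum_zero hNt h
      have h2 := ih hb
      intro h0
      apply h2
      linarith
  have hnz : ∀ u : (G.connectedComponentMk v₀).supp, x ↑u ≠ 0 := by
    rintro ⟨u, hu⟩
    rw [SimpleGraph.ConnectedComponent.mem_supp_iff, SimpleGraph.ConnectedComponent.eq] at hu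
    obtain ⟨p⟩ := hu
    exact key p hv₀
  refine ⟨SimpleGraph.Coloring.mk (fun u => if 0 < x ↑u then (0 : Fin 2) else 1) ?_⟩
  intro u w hadj
  rw [SimpleGraph.comap_adj] at hadj
  simp only [Function.Embedding.coe_subtype] at hadj
  have h1 := edge_sum_zero hNt hadj
  have h2 := hnz u
  have h3 := hnz w
  by_cases hu : 0 < x ↑u
  · have hw : ¬ 0 < x ↑w := by intro hw; linarith
    simp [hu, hw]
  · have hw : 0 < x ↑w := by
      rcases lt_trichotomy (x ↑u) 0 with h | h | h
      · linarith
      · exact absurd h h2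
      · exact absurd h hu
    simp [hu, hw]

lemma hasEigQ_zero_of_bipartite (C : G.ConnectedComponent)
    (hC : (G.induce C.supp).Colorable 2) : HasEig (signQ G) 0 := by
  classical
  obtain ⟨c⟩ := hC
  set x : V → ℝ := fun v =>
    if h : v ∈ C.supp then (if c ⟨v, h⟩ = 0 then 1 else -1) else 0 with hxdef
  have hxval : ∀ v (h : v ∈ C.supp), x v = if c ⟨v, h⟩ = 0 then 1 else -1 := by
    intro v h; simp only [hxdef]; rw [dif_pos h]
  have hxzero : ∀ v, v ∉ C.supp → x v = 0 := by
    intro v h; simp only [hxdef]; exact dif_neg h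
  have hx : x ≠ 0 := by
    obtain ⟨v₀, hv₀⟩ := C.exists_rep
    have hv : v₀ ∈ C.supp := by rwa [SimpleGraph.ConnectedComponent.mem_supp_iff]
    intro h0
    have h5 := congrFun h0 v₀
    rw [hxval v₀ hv] at h5
    by_cases hc : c ⟨v₀, hv⟩ = 0 <;> simp [hc] at h5
  have hNt : (inc G)ᵀ *ᵥ x = 0 := by
    funext e
    obtain ⟨a, b, hab, he⟩ := exists_adj_eq e
    have hsum : ((inc G)ᵀ *ᵥ x) e = x a + x b := dot_inc_col x hab.ne he
    rw [Pi.zero_apply, hsum]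
    by_cases ha : a ∈ C.supp
    · have hb : b ∈ C.supp := by
        rw [SimpleGraph.ConnectedComponent.mem_supp_iff] at ha ⊢
        rw [← ha]
        exact (SimpleGraph.ConnectedComponent.eq).mpr hab.symm.reachable
      have hcc : c ⟨a, ha⟩ ≠ c ⟨b, hb⟩ := by
        apply c.valid
        rw [SimpleGraph.comap_adj]
        exact hab
      rw [hxval a ha, hxval b hb]
      rcases (by decide : ∀ p q : Fin 2, p ≠ q → (p = 0 ∧ ¬ q = 0) ∨ (¬ p = 0 ∧ q = 0))
        _ _ hcc with ⟨h1, h2⟩ | ⟨h1, h2⟩ <;> simp [h1, h2]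
    · have hb : b ∉ C.supp := by
        rw [SimpleGraph.ConnectedComponent.mem_supp_iff] at ha ⊢
        intro hb
        apply ha
        rw [← hb]
        exact (SimpleGraph.ConnectedComponent.eq).mpr hab.reachable
      rw [hxzero a ha, hxzero b hb, add_zero]
  refine ⟨x, hx, ?_⟩
  rw [← inc_mul_transpose G, ← mulVec_mulVec, hNt, mulVec_zero, zero_smul]

end IncAux

/-- if `m > n` then `S_L(G) = q₁ ≥ S_Q(G)`, with equality iff `G` has a
bipartite connected component. -/
theorem lineGraph_spread_of_many_edges {V : Type*} [Fintype V] [DecidableEq V]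
    (G : SimpleGraph V) (hmn : Fintype.card V < numEdges G) :
    sprd (adjMat_isHermitian G.lineGraph) = maxEig (signQ_isHermitian G) ∧
    sprd (signQ_isHermitian G) ≤ sprd (adjMat_isHermitian G.lineGraph) ∧
    (sprd (adjMat_isHermitian G.lineGraph) = sprd (signQ_isHermitian G) ↔
      ∃ C : G.ConnectedComponent, (G.induce C.supp).Colorable 2) := by
  classical
  have hcard : Fintype.card V < Fintype.card G.edgeSet := by
    rwa [numEdges, Nat.card_eq_fintype_card] at hmn
  have hEne : Nonempty G.edgeSet := by
    have : 0 < Fintype.card G.edgeSet := lt_of_le_of_lt (Nat.zero_le _) hcard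
    exact Fintype.card_pos_iff.mp this
  have hVne : Nonempty V := by
    obtain ⟨e⟩ := hEne
    obtain ⟨a, b, hab, he⟩ := exists_adj_eq e
    exact ⟨a⟩
  have hQ : inc G * (inc G)ᵀ = signQ G := inc_mul_transpose G
  have hL : (inc G)ᵀ * inc G = adjMat G.lineGraph + (2:ℝ) • 1 := transpose_mul_inc G
  have hQpsd : (signQ G).PosSemidef := by
    rw [← hQ]
    have h := posSemidef_self_mul_conjTranspose (inc G)
    rwa [conjTranspose_eq_transpose_of_trivial] at h
  have hBpsd : ((inc G)ᵀ * inc G).PosSemidef := by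
    have h := posSemidef_conjTranspose_mul_self (inc G)
    rwa [conjTranspose_eq_transpose_of_trivial] at h
  have hBH : ((inc G)ᵀ * inc G).IsHermitian := hBpsd.1
  have hQH := signQ_isHermitian G
  have hLH := adjMat_isHermitian G.lineGraph
  have hB2H : (adjMat G.lineGraph + (2:ℝ) • 1).IsHermitian := hL ▸ hBH
  -- maxEig of BᵀB equals maxEig of Q
  have hmaxBQ : maxEig hBH = maxEig hQH := by
    apply le_antisymm
    · apply ciSup_le
      intro i
      by_cases h0 : hBH.eigenvalues i = 0
      · rw [h0]
        exact le_trans (hQpsd.eigenvalues_nonneg (Classical.arbitrary V))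
          (eigenvalues_le_maxEig hQH _)
      · refine hasEig_le_maxEig hQH ?_
        have h := hasEig_transpose_mul_of_mul_transpose (inc G) h0
          (hasEig_eigenvalues hBH i)
        rwa [hQ] at h
    · apply ciSup_le
      intro j
      by_cases h0 : hQH.eigenvalues j = 0
      · rw [h0]
        exact le_trans (hBpsd.eigenvalues_nonneg (Classical.arbitrary _))
          (eigenvalues_le_maxEig hBH _)
      · refine hasEig_le_maxEig hBH ?_
        obtain ⟨x, hx, hAx⟩ := hasEig_eigenvalues hQH j
        have h2 := hasEig_transpose_mul_of_mul_transpose (inc G)ᵀ h0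
          ⟨x, hx, by rw [transpose_transpose, hQ]; exact hAx⟩
        rwa [transpose_transpose] at h2
  -- minEig of BᵀB is zero
  have hker : ∃ y : G.edgeSet → ℝ, y ≠ 0 ∧ inc G *ᵥ y = 0 := by
    by_contra hc
    push_neg at hc
    have hinj : Function.Injective (inc G).mulVecLin := by
      rw [← LinearMap.ker_eq_bot, LinearMap.ker_eq_bot']
      intro y hy
      by_contra h0
      exact hc y h0 (by simpa using hy)
    have hle := LinearMap.finrank_le_finrank_of_injective hinj
    rw [Module.finrank_pi, Module.finrank_pi] at hle
    omega
  have hminB : minEig hBH = 0 := by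
    apply le_antisymm
    · obtain ⟨y, hy, hNy⟩ := hker
      refine minEig_le_hasEig hBH ⟨y, hy, ?_⟩
      rw [← mulVec_mulVec, hNy, mulVec_zero, zero_smul]
    · exact minEig_nonneg hBpsd
  -- transfer to the line graph spectrum via the +2 shift
  have hmaxL : maxEig hLH = maxEig hQH - 2 := by
    have h1 := maxEig_add_smul_one hLH 2 hB2H
    have h2 := maxEig_congr hL hBH hB2H
    linarith [hmaxBQ]
  have hminL : minEig hLH = -2 := by
    have h1 := minEig_add_smul_one hLH 2 hB2H
    have h2 := minEig_congr hL hBH hB2H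
    linarith [hminB]
  have hQmin : 0 ≤ minEig hQH := minEig_nonneg hQpsd
  have hsprdL : sprd (adjMat_isHermitian G.lineGraph) = maxEig (signQ_isHermitian G) := by
    rw [sprd, hmaxL, hminL]
    ring
  refine ⟨hsprdL, ?_, ?_⟩
  · rw [hsprdL, sprd]
    linarith
  · rw [hsprdL, sprd]
    constructor
    · intro h
      have hq0 : minEig hQH = 0 := by linarith
      have h2 := hasEig_minEig hQH
      rw [hq0] at h2
      exact bipartite_of_hasEigQ_zero h2
    · intro ⟨C, hC⟩
      have h2 := hasEigQ_zero_of_bipartite C hC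
      have h3 := minEig_le_hasEig hQH h2
      have hq0 : minEig hQH = 0 := le_antisymm h3 hQmin
      rw [hq0]
      ring


end SpreadPaper
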